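/- Let d ≥ 2 and let D = {(A_i^{(1)},…,A_i^{(d)})}_{1≤i≤m} be a skew Bollobás system of d-partitions of [n]. Then ∑_{i=1}^m binom(∑_{r=1}^d |A_i^{(r)}|; |A_i^{(1)}|,…,|A_i^{(d)}|)^{-1} ≤ binom(n + d - 1, d - 1). -/

import Mathlib

open Finset

namespace SkewBollobas
set_option linter.unusedSectionVars false

variable {n d : ℕ}

/-- rank of `y` in `S`. -/
def rk (S : Finset (Fin n)) (y : Fin n) : ℕ := (S.filter (· < y)).card

lemma rk_lt_card {S : Finset (Fin n)} {y : Fin n} (hy : y ∈ S) : rk S y < S.card := by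
  apply card_lt_card
  refine ⟨filter_subset _ _, fun h => ?_⟩
  have := h hy
  simp at this

lemma rk_inj {S : Finset (Fin n)} {y z : Fin n} (hy : y ∈ S) (hz : z ∈ S)
    (h : rk S y = rk S z) : y = z := by
  rcases lt_trichotomy y z with hlt | he | hlt
  · exfalso
    have : rk S y < rk S z := by
      apply card_lt_card
      refine ⟨fun w hw => ?_, fun hsub => ?_⟩
      · simp only [mem_filter] at hw ⊢
        exact ⟨hw.1, hw.2.trans hlt⟩
      · have := hsub (by simp [mem_filter, hy, hlt] : y ∈ S.filter (· < z))
        simp at this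
    omega
  · exact he
  · exfalso
    have : rk S z < rk S y := by
      apply card_lt_card
      refine ⟨fun w hw => ?_, fun hsub => ?_⟩
      · simp only [mem_filter] at hw ⊢
        exact ⟨hw.1, hw.2.trans hlt⟩
      · have := hsub (by simp [mem_filter, hz, hlt] : z ∈ S.filter (· < y))
        simp at this
    omega

variable (B : Fin d → Finset (Fin n)) (hd : 2 ≤ d)

def U : Finset (Fin n) := univ.biUnion B

lemma mem_U_iff {x : Fin n} : x ∈ U B ↔ ∃ r, x ∈ B r := by simp [U]

def asz : ℕ := ∑ r, (B r).card

def off (r : Fin d) : ℕ := ∑ r' ∈ univ.filter (· < r), (B r').card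

lemma off_mono {r s : Fin d} (h : r ≤ s) : off B r ≤ off B s := by
  apply sum_le_sum_of_subset
  intro z hz
  simp only [mem_filter, mem_univ, true_and] at hz ⊢
  exact lt_of_lt_of_le hz h

lemma off_add_card_le_off {r s : Fin d} (h : r < s) : off B r + (B r).card ≤ off B s := by
  have : off B r + (B r).card = ∑ r' ∈ insert r (univ.filter (· < r)), (B r').card := by
    rw [sum_insert (by simp), add_comm, off]
  rw [this]
  apply sum_le_sum_of_subset
  intro z hz
  simp only [mem_insert, mem_filter, mem_univ, true_and] at hz ⊢
  rcases hz with rfl | hz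
  · exact h
  · exact hz.trans h

lemma off_add_card_le_asz (r : Fin d) : off B r + (B r).card ≤ asz B := by
  have : off B r + (B r).card = ∑ r' ∈ insert r (univ.filter (· < r)), (B r').card := by
    rw [sum_insert (by simp), add_comm, off]
  rw [this, asz]
  exact sum_le_sum_of_subset (subset_univ _)

lemma off_block_inj {r s : Fin d} {v w : ℕ} (hv : v < (B r).card) (hw : w < (B s).card)
    (h : off B r + v = off B s + w) : r = s := by
  rcases lt_trichotomy r s with hlt | he | hlt
  · have := off_add_card_le_off B hlt
    omega
  · exact he
  · have := off_add_card_le_off B hlt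
    omega

noncomputable def grp (x : Fin n) : Fin d :=
  if h : ∃ r, x ∈ B r then h.choose else ⟨0, by omega⟩

lemma grp_mem {x : Fin n} (hx : x ∈ U B) : x ∈ B (grp B hd x) := by
  rw [mem_U_iff] at hx
  rw [grp, dif_pos hx]
  exact hx.choose_spec

lemma grp_eq (hdisj : ∀ p q : Fin d, p ≠ q → Disjoint (B p) (B q))
    {x : Fin n} {r : Fin d} (hx : x ∈ B r) : grp B hd x = r := by
  by_contra hne
  have hxU : x ∈ U B := (mem_U_iff B).mpr ⟨r, hx⟩
  exact (Finset.disjoint_left.mp (hdisj _ _ hne) (grp_mem B hd hxU)) hx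

lemma card_U (hdisj : ∀ p q : Fin d, p ≠ q → Disjoint (B p) (B q)) :
    (U B).card = asz B := by
  rw [U, card_biUnion]
  · rfl
  · exact fun p _ q _ hpq => hdisj p q hpq

variable (hdisj : ∀ p q : Fin d, p ≠ q → Disjoint (B p) (B q))
include hd hdisj

def V (π : Equiv.Perm (Fin n)) : Finset (Fin n) := (U B).image π

lemma card_V (π : Equiv.Perm (Fin n)) : (V B π).card = asz B := by
  rw [V, card_image_of_injective _ π.injective, card_U B hdisj]

/-- the increasing enumeration of `V π`. -/
noncomputable def embV (π : Equiv.Perm (Fin n)) : Fin (asz B) ↪o Fin n :=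
  (V B π).orderEmbOfFin (card_V B hd hdisj π)

/-- rank of `π x` within the image of its own block. -/
noncomputable def grpRank (π : Equiv.Perm (Fin n)) (x : Fin n) : ℕ :=
  rk ((B (grp B hd x)).image π) (π x)

lemma grpRank_lt {π : Equiv.Perm (Fin n)} {x : Fin n} (hx : x ∈ U B) :
    grpRank B hd π x < (B (grp B hd x)).card := by
  have h1 : π x ∈ (B (grp B hd x)).image π :=
    mem_image_of_mem _ (grp_mem B hd hx)
  have := rk_lt_card h1
  rwa [card_image_of_injective _ π.injective] at this

noncomputable def kIdx (π : Equiv.Perm (Fin n)) (x : Fin n) : ℕ :=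
  off B (grp B hd x) + grpRank B hd π x

lemma kIdx_lt {π : Equiv.Perm (Fin n)} {x : Fin n} (hx : x ∈ U B) :
    kIdx B hd π x < asz B :=
  lt_of_lt_of_le (by exact Nat.add_lt_add_left (grpRank_lt B hd hdisj hx) _)
    (off_add_card_le_asz B _)

/-- the "sorted within groups" version of `π`. -/
noncomputable def phat (π : Equiv.Perm (Fin n)) : Fin n → Fin n := fun x =>
  if hx : x ∈ U B then embV B hd hdisj π ⟨kIdx B hd π x, kIdx_lt B hd hdisj hx⟩ else π x

lemma phat_mem_V {π : Equiv.Perm (Fin n)} {x : Fin n} (hx : x ∈ U B) :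
    phat B hd hdisj π x ∈ V B π := by
  simp only [phat, dif_pos hx]
  exact Finset.orderEmbOfFin_mem _ _ _

lemma phat_of_not_mem {π : Equiv.Perm (Fin n)} {x : Fin n} (hx : x ∉ U B) :
    phat B hd hdisj π x = π x := by
  simp only [phat, dif_neg hx]

lemma not_mem_V_of_not_mem {π : Equiv.Perm (Fin n)} {x : Fin n} (hx : x ∉ U B) :
    π x ∉ V B π := by
  rw [V]
  intro h
  obtain ⟨y, hy, hyx⟩ := mem_image.mp h
  exact hx (π.injective hyx ▸ hy)

lemma phat_inj (π : Equiv.Perm (Fin n)) : Function.Injective (phat B hd hdisj π) := by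
  intro x y h
  by_cases hx : x ∈ U B <;> by_cases hy : y ∈ U B
  · simp only [phat, dif_pos hx, dif_pos hy] at h
    have hk : kIdx B hd π x = kIdx B hd π y := by
      have := (embV B hd hdisj π).injective h
      exact congrArg Fin.val this
    have hg : grp B hd x = grp B hd y :=
      off_block_inj B (grpRank_lt B hd hdisj hx) (grpRank_lt B hd hdisj hy) hk
    rw [kIdx, kIdx, hg] at hk
    have hr : grpRank B hd π x = grpRank B hd π y := by omega
    rw [grpRank, grpRank, hg] at hr
    have : π x = π y :=
      rk_inj (mem_image_of_mem _ (hg ▸ grp_mem B hd hx)) (mem_image_of_mem _ (grp_mem B hd hy)) hr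
    exact π.injective this
  · exact absurd (h ▸ phat_mem_V B hd hdisj hx)
      (phat_of_not_mem B hd hdisj hy ▸ not_mem_V_of_not_mem B hd hdisj hy)
  · exact absurd (h ▸ phat_mem_V B hd hdisj hy)
      (by rw [phat_of_not_mem B hd hdisj hx]; exact not_mem_V_of_not_mem B hd hdisj hx)
  · simp only [phat_of_not_mem B hd hdisj hx, phat_of_not_mem B hd hdisj hy] at h
    exact π.injective h

lemma image_phat_U (π : Equiv.Perm (Fin n)) :
    (U B).image (phat B hd hdisj π) = V B π := by
  apply eq_of_subset_of_card_le
  · intro p hp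
    obtain ⟨x, hx, rfl⟩ := mem_image.mp hp
    exact phat_mem_V B hd hdisj hx
  · rw [card_V B hd hdisj, card_image_of_injective _ (phat_inj B hd hdisj π),
      card_U B hdisj]

/-- threshold for bar `r`. -/
noncomputable def bnd (π : Equiv.Perm (Fin n)) (r : Fin d) : ℕ :=
  if h : off B r < asz B then (embV B hd hdisj π ⟨off B r, h⟩ : ℕ) else n

/-- how many bars lie strictly below position `t`. -/
noncomputable def shiftf (π : Equiv.Perm (Fin n)) (t : ℕ) : ℕ :=
  (univ.filter fun r : Fin d => 0 < (r : ℕ) ∧ bnd B hd hdisj π r ≤ t).card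

lemma shiftf_le (π : Equiv.Perm (Fin n)) (t : ℕ) : shiftf B hd hdisj π t ≤ d - 1 := by
  have : (univ.filter fun r : Fin d => 0 < (r : ℕ) ∧ bnd B hd hdisj π r ≤ t) ⊆
      univ.erase ⟨0, by omega⟩ := by
    intro r hr
    simp only [mem_filter] at hr
    apply mem_erase.mpr
    refine ⟨?_, mem_univ _⟩
    intro h0
    rw [h0] at hr
    simp at hr
  have h2 := card_le_card this
  rwa [card_erase_of_mem (mem_univ _), card_univ, Fintype.card_fin] at h2

lemma shiftf_mono (π : Equiv.Perm (Fin n)) {t t' : ℕ} (h : t ≤ t') :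
    shiftf B hd hdisj π t ≤ shiftf B hd hdisj π t' := by
  apply card_le_card
  intro r hr
  simp only [mem_filter] at hr ⊢
  exact ⟨hr.1, hr.2.1, hr.2.2.trans h⟩

lemma card_Ioc_fin {k : ℕ} (hk : k < d) :
    (univ.filter fun r : Fin d => 0 < (r : ℕ) ∧ (r : ℕ) ≤ k).card = k := by
  refine (Finset.card_nbij (t := Finset.Ioc 0 k) Fin.val ?_ ?_ ?_).trans
    (by rw [Nat.card_Ioc]; omega)
  · intro r hr
    simp only [Finset.mem_coe, mem_filter] at hr
    simp only [Finset.coe_Ioc, Set.mem_Ioc, Finset.mem_coe, Finset.mem_Ioc]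
    exact ⟨hr.2.1, hr.2.2⟩
  · intro r _ s _ h
    exact Fin.val_injective h
  · intro j hj
    simp only [Finset.coe_Ioc, Set.mem_Ioc] at hj
    simp only [Set.mem_image]
    refine ⟨⟨j, lt_of_le_of_lt hj.2 hk⟩, ?_, rfl⟩
    simp only [Finset.mem_coe, mem_filter]
    exact ⟨mem_univ _, hj.1, hj.2⟩

lemma shiftf_phat {π : Equiv.Perm (Fin n)} {x : Fin n} {s : Fin d} (hx : x ∈ B s) :
    shiftf B hd hdisj π ((phat B hd hdisj π x : Fin n) : ℕ) = (s : ℕ) := by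
  have hxU : x ∈ U B := (mem_U_iff B).mpr ⟨s, hx⟩
  have hgs : grp B hd x = s := grp_eq B hd hdisj hx
  have hphat : phat B hd hdisj π x = embV B hd hdisj π ⟨kIdx B hd π x, kIdx_lt B hd hdisj hxU⟩ := by
    simp only [phat, dif_pos hxU]
  have hkIdx : kIdx B hd π x = off B s + grpRank B hd π x := by rw [kIdx, hgs]
  have hgrank : grpRank B hd π x < (B s).card := hgs ▸ grpRank_lt B hd hdisj hxU
  rw [shiftf]
  rw [show (univ.filter fun r : Fin d => 0 < (r : ℕ) ∧
        bnd B hd hdisj π r ≤ ((phat B hd hdisj π x : Fin n) : ℕ)) =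
      (univ.filter fun r : Fin d => 0 < (r : ℕ) ∧ (r : ℕ) ≤ (s : ℕ)) from ?_]
  · exact card_Ioc_fin B hd hdisj s.isLt
  apply filter_congr
  intro r _
  by_cases h0 : 0 < (r : ℕ)
  · simp only [h0, true_and, eq_iff_iff]
    constructor
    · intro hb
      by_contra hrs
      push_neg at hrs
      have hsr : s < r := by exact Fin.lt_def.mpr hrs
      -- then kIdx x < off r, so phat x < bnd r
      have h1 : kIdx B hd π x < off B r := by
        have := off_add_card_le_off B hsr
        omega
      rw [bnd] at hb
      by_cases h2 : off B r < asz B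
      · rw [dif_pos h2] at hb
        have : (⟨kIdx B hd π x, kIdx_lt B hd hdisj hxU⟩ : Fin (asz B)) < ⟨off B r, h2⟩ :=
          Fin.mk_lt_mk.mpr h1
        have h3 := (embV B hd hdisj π).strictMono this
        rw [← hphat] at h3
        omega
      · rw [dif_neg h2] at hb
        have := (phat B hd hdisj π x).isLt
        omega
    · intro hrs
      have hrs' : r ≤ s := Fin.le_def.mpr hrs
      have h1 : off B r < asz B := by
        have h2 : off B r ≤ off B s := off_mono B hrs'
        have := off_add_card_le_asz B s
        omega
      rw [bnd, dif_pos h1]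
      have : (⟨off B r, h1⟩ : Fin (asz B)) ≤ ⟨kIdx B hd π x, kIdx_lt B hd hdisj hxU⟩ := by
        apply Fin.mk_le_mk.mpr
        have h2 : off B r ≤ off B s := off_mono B hrs'
        omega
      have h3 := (embV B hd hdisj π).monotone this
      rw [← hphat] at h3
      exact h3
  · simp [h0]

lemma sigma_val_lt (π : Equiv.Perm (Fin n)) (x : Fin n) :
    ((phat B hd hdisj π x : Fin n) : ℕ) + shiftf B hd hdisj π (phat B hd hdisj π x : Fin n)
      < n + d - 1 := by
  have h1 := (phat B hd hdisj π x).isLt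
  have h2 := shiftf_le B hd hdisj π ((phat B hd hdisj π x : Fin n) : ℕ)
  omega

/-- the compatible embedding associated to `π`. -/
noncomputable def sigma (π : Equiv.Perm (Fin n)) : Fin n → Fin (n + d - 1) := fun x =>
  ⟨((phat B hd hdisj π x : Fin n) : ℕ) + shiftf B hd hdisj π (phat B hd hdisj π x : Fin n),
    sigma_val_lt B hd hdisj π x⟩

lemma sigma_lt_iff (π : Equiv.Perm (Fin n)) {x y : Fin n} :
    sigma B hd hdisj π x < sigma B hd hdisj π y ↔
      phat B hd hdisj π x < phat B hd hdisj π y := by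
  constructor
  · intro h
    by_contra hle
    push_neg at hle
    have h1 : ((phat B hd hdisj π y : Fin n) : ℕ) ≤ (phat B hd hdisj π x : Fin n) :=
      Fin.le_def.mp hle
    have h2 := shiftf_mono B hd hdisj π h1
    rw [sigma, sigma, Fin.mk_lt_mk] at h
    omega
  · intro h
    have h1 : ((phat B hd hdisj π x : Fin n) : ℕ) ≤ (phat B hd hdisj π y : Fin n) :=
      le_of_lt (Fin.lt_def.mp h)
    have h2 := shiftf_mono B hd hdisj π h1
    rw [sigma, sigma, Fin.mk_lt_mk]
    have h3 : ((phat B hd hdisj π x : Fin n) : ℕ) < (phat B hd hdisj π y : Fin n) :=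
      Fin.lt_def.mp h
    omega

lemma sigma_inj (π : Equiv.Perm (Fin n)) : Function.Injective (sigma B hd hdisj π) := by
  intro x y h
  apply phat_inj B hd hdisj π
  rcases lt_trichotomy (phat B hd hdisj π x) (phat B hd hdisj π y) with hlt | he | hlt
  · exact absurd ((sigma_lt_iff B hd hdisj π).mpr hlt) (by rw [h]; exact lt_irrefl _)
  · exact he
  · exact absurd ((sigma_lt_iff B hd hdisj π).mpr hlt) (by rw [h]; exact lt_irrefl _)

noncomputable def sigmaEmb (π : Equiv.Perm (Fin n)) : Fin n ↪ Fin (n + d - 1) :=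
  ⟨sigma B hd hdisj π, sigma_inj B hd hdisj π⟩

omit hd hdisj in
lemma card_filter_lt_of_bij {g : Fin n → Fin n} (hg : Function.Bijective g) (c : Fin n) :
    (univ.filter fun y => g y < c).card = (c : ℕ) := by
  have : Nonempty (Fin n) := ⟨c⟩
  have h1 : (univ.filter fun y : Fin n => g y < c) =
      (univ.filter fun z : Fin n => z < c).image (Function.invFun g) := by
    ext y
    simp only [mem_filter, mem_univ, true_and, mem_image]
    constructor
    · intro h
      exact ⟨g y, h, by rw [Function.leftInverse_invFun hg.injective]⟩
    · rintro ⟨z, hz, rfl⟩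
      rwa [Function.rightInverse_invFun hg.surjective]
    
  rw [h1, card_image_of_injective _ (Function.rightInverse_invFun hg.surjective).injective]
  rw [show univ.filter (fun z : Fin n => z < c) = Iio c by ext z; simp]
  exact Fin.card_Iio c

lemma phat_rank (π : Equiv.Perm (Fin n)) (x : Fin n) :
    (univ.filter fun y => sigma B hd hdisj π y < sigma B hd hdisj π x).card
      = ((phat B hd hdisj π x : Fin n) : ℕ) := by
  rw [show (univ.filter fun y => sigma B hd hdisj π y < sigma B hd hdisj π x) =
      (univ.filter fun y => phat B hd hdisj π y < phat B hd hdisj π x) from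
    filter_congr fun y _ => sigma_lt_iff B hd hdisj π]
  exact card_filter_lt_of_bij
    (Finite.injective_iff_bijective.mp (phat_inj B hd hdisj π)) _

end SkewBollobas

open SkewBollobas in
/-- block index of `x` under an embedding: position minus rank. -/
def blkfun {n N : ℕ} (f : Fin n ↪ Fin N) (x : Fin n) : ℕ :=
  ((f x : ℕ)) - (univ.filter fun y => f y < f x).card

def compat {n d : ℕ} (B : Fin d → Finset (Fin n)) (f : Fin n ↪ Fin (n + d - 1)) : Prop :=
  ∀ r : Fin d, ∀ x ∈ B r, blkfun f x = (r : ℕ)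

instance {n d : ℕ} (B : Fin d → Finset (Fin n)) : DecidablePred (compat B) := fun _ =>
  by unfold compat; infer_instance

namespace SkewBollobas

variable {n d : ℕ} (B : Fin d → Finset (Fin n)) (hd : 2 ≤ d)
  (hdisj : ∀ p q : Fin d, p ≠ q → Disjoint (B p) (B q))
include hd hdisj

lemma sigma_compat (π : Equiv.Perm (Fin n)) : compat B (sigmaEmb B hd hdisj π) := by
  intro r x hx
  have h1 : (univ.filter fun y => sigmaEmb B hd hdisj π y < sigmaEmb B hd hdisj π x).card
      = ((phat B hd hdisj π x : Fin n) : ℕ) := phat_rank B hd hdisj π x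
  rw [blkfun, h1]
  have h2 : ((sigmaEmb B hd hdisj π x : Fin (n + d - 1)) : ℕ)
      = ((phat B hd hdisj π x : Fin n) : ℕ)
        + shiftf B hd hdisj π (phat B hd hdisj π x : Fin n) := rfl
  rw [h2, shiftf_phat B hd hdisj hx]
  omega

/-- the element of `U` sitting (under `π`) at the `k`-th smallest position of `V`. -/
noncomputable def eF (π : Equiv.Perm (Fin n)) (k : Fin (asz B)) : Fin n :=
  π.symm (embV B hd hdisj π k)

lemma eF_mem_U (π : Equiv.Perm (Fin n)) (k : Fin (asz B)) : eF B hd hdisj π k ∈ U B := by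
  have h1 : embV B hd hdisj π k ∈ V B π := Finset.orderEmbOfFin_mem _ _ _
  rw [V] at h1
  obtain ⟨x, hx, hpx⟩ := mem_image.mp h1
  rw [eF, ← hpx, Equiv.symm_apply_apply]
  exact hx

lemma pi_eF (π : Equiv.Perm (Fin n)) (k : Fin (asz B)) :
    π (eF B hd hdisj π k) = embV B hd hdisj π k := Equiv.apply_symm_apply _ _

omit hd hdisj in
/-- a total ℕ-valued version of a tuple of permutations of the blocks. -/
def rhoN (ρ : ∀ r : Fin d, Equiv.Perm (Fin (B r).card)) (r : Fin d) (j : ℕ) : ℕ :=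
  if h : j < (B r).card then (ρ r ⟨j, h⟩ : ℕ) else j

omit hd hdisj in
lemma rhoN_lt {ρ : ∀ r : Fin d, Equiv.Perm (Fin (B r).card)} {r : Fin d} {j : ℕ}
    (h : j < (B r).card) : rhoN B ρ r j < (B r).card := by
  rw [rhoN, dif_pos h]
  exact (ρ r _).isLt

lemma tau_val_lt (π : Equiv.Perm (Fin n)) (ρ : ∀ r : Fin d, Equiv.Perm (Fin (B r).card))
    (k : Fin (asz B)) :
    off B (grp B hd (eF B hd hdisj π k))
      + rhoN B ρ (grp B hd (eF B hd hdisj π k)) (grpRank B hd π (eF B hd hdisj π k))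
      < asz B := by
  have h1 := rhoN_lt B (ρ := ρ) (grpRank_lt B hd hdisj (π := π) (eF_mem_U B hd hdisj π k))
  have h2 := off_add_card_le_asz B (grp B hd (eF B hd hdisj π k))
  omega

noncomputable def tauF (π : Equiv.Perm (Fin n)) (ρ : ∀ r : Fin d, Equiv.Perm (Fin (B r).card)) :
    Fin (asz B) → Fin (asz B) := fun k =>
  ⟨off B (grp B hd (eF B hd hdisj π k))
      + rhoN B ρ (grp B hd (eF B hd hdisj π k)) (grpRank B hd π (eF B hd hdisj π k)),
    tau_val_lt B hd hdisj π ρ k⟩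

lemma tauF_inj (π : Equiv.Perm (Fin n)) (ρ : ∀ r : Fin d, Equiv.Perm (Fin (B r).card)) :
    Function.Injective (tauF B hd hdisj π ρ) := by
  intro k k' h
  set x := eF B hd hdisj π k with hxdef
  set x' := eF B hd hdisj π k' with hx'def
  have hxU : x ∈ U B := eF_mem_U B hd hdisj π k
  have hx'U : x' ∈ U B := eF_mem_U B hd hdisj π k'
  have hval : off B (grp B hd x) + rhoN B ρ (grp B hd x) (grpRank B hd π x)
      = off B (grp B hd x') + rhoN B ρ (grp B hd x') (grpRank B hd π x') :=
    congrArg Fin.val h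
  have hg : grp B hd x = grp B hd x' :=
    off_block_inj B (rhoN_lt B (ρ := ρ) (grpRank_lt B hd hdisj (π := π) hxU))
      (rhoN_lt B (ρ := ρ) (grpRank_lt B hd hdisj (π := π) hx'U)) hval
  have hrho : rhoN B ρ (grp B hd x) (grpRank B hd π x)
      = rhoN B ρ (grp B hd x) (grpRank B hd π x') := by rw [hg] at hval ⊢; omega
  have hglt := grpRank_lt B hd hdisj (π := π) hxU
  have hglt' := grpRank_lt B hd hdisj (π := π) hx'U
  rw [← hg] at hglt'
  rw [rhoN, dif_pos hglt, rhoN, dif_pos hglt'] at hrho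
  have hj : grpRank B hd π x = grpRank B hd π x' := by
    have := (ρ (grp B hd x)).injective (Fin.val_injective hrho)
    exact congrArg Fin.val this
  -- now ranks equal in the same set
  have hxx' : π x = π x' := by
    have hmx : π x ∈ (B (grp B hd x)).image π := mem_image_of_mem _ (grp_mem B hd hxU)
    have hmx' : π x' ∈ (B (grp B hd x)).image π := by
      rw [hg]; exact mem_image_of_mem _ (grp_mem B hd hx'U)
    apply rk_inj hmx hmx'
    have e1 : rk ((B (grp B hd x)).image π) (π x) = grpRank B hd π x := rfl
    have e2 : rk ((B (grp B hd x)).image π) (π x') = grpRank B hd π x' := by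
      rw [grpRank, hg]
    rw [e1, e2, hj]
  have : embV B hd hdisj π k = embV B hd hdisj π k' := by
    rw [← pi_eF B hd hdisj π k, ← pi_eF B hd hdisj π k', ← hxdef, ← hx'def, hxx']
  exact (embV B hd hdisj π).injective this

noncomputable def tauEmb (π : Equiv.Perm (Fin n))
    (ρ : ∀ r : Fin d, Equiv.Perm (Fin (B r).card)) : Fin (asz B) ↪ Fin (asz B) :=
  ⟨tauF B hd hdisj π ρ, tauF_inj B hd hdisj π ρ⟩

lemma mem_V_exists {π : Equiv.Perm (Fin n)} {p : Fin n} (hp : p ∈ V B π) :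
    ∃ k, embV B hd hdisj π k = p := by
  have h2 : p ∈ Set.range (embV B hd hdisj π) := by
    rw [embV]
    rw [Finset.range_orderEmbOfFin]
    exact hp
  exact h2

lemma grpRank_surj (π : Equiv.Perm (Fin n)) (r : Fin d) (j : Fin (B r).card) :
    ∃ x ∈ B r, grpRank B hd π x = (j : ℕ) := by
  have hcard : ((B r).image π).card = (B r).card := card_image_of_injective _ π.injective
  let g : {x // x ∈ B r} → Fin (B r).card := fun xs =>
    ⟨rk ((B r).image π) (π xs.1), hcard ▸ rk_lt_card (mem_image_of_mem _ xs.2)⟩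
  have hginj : Function.Injective g := by
    intro xs ys hxy
    have h1 : rk ((B r).image π) (π xs.1) = rk ((B r).image π) (π ys.1) :=
      congrArg Fin.val hxy
    have := rk_inj (mem_image_of_mem _ xs.2) (mem_image_of_mem _ ys.2) h1
    exact Subtype.ext (π.injective this)
  have hcard2 : Fintype.card {x // x ∈ B r} = Fintype.card (Fin (B r).card) := by
    rw [Fintype.card_coe, Fintype.card_fin]
  have hgsurj := ((Fintype.bijective_iff_injective_and_card g).mpr ⟨hginj, hcard2⟩).surjective
  obtain ⟨⟨x, hxB⟩, hgx⟩ := hgsurj j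
  refine ⟨x, hxB, ?_⟩
  rw [grpRank, grp_eq B hd hdisj hxB]
  exact congrArg Fin.val hgx

noncomputable def Theta
    (pr : Equiv.Perm (Fin n) × (∀ r : Fin d, Equiv.Perm (Fin (B r).card))) :
    {f : Fin n ↪ Fin (n + d - 1) // compat B f} × (Fin (asz B) ↪ Fin (asz B)) :=
  (⟨sigmaEmb B hd hdisj pr.1, sigma_compat B hd hdisj pr.1⟩, tauEmb B hd hdisj pr.1 pr.2)

lemma Theta_inj : Function.Injective (Theta B hd hdisj) := by
  rintro ⟨π, ρ⟩ ⟨π', ρ'⟩ h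
  have hσe : sigmaEmb B hd hdisj π = sigmaEmb B hd hdisj π' :=
    congrArg Subtype.val (congrArg Prod.fst h)
  have hσ : ∀ x, sigma B hd hdisj π x = sigma B hd hdisj π' x := fun x =>
    DFunLike.congr_fun hσe x
  have hτe : tauEmb B hd hdisj π ρ = tauEmb B hd hdisj π' ρ' := congrArg Prod.snd h
  have hτ : ∀ k, tauF B hd hdisj π ρ k = tauF B hd hdisj π' ρ' k := fun k =>
    DFunLike.congr_fun hτe k
  -- step 1 : phat agrees
  have hphat : ∀ x, phat B hd hdisj π x = phat B hd hdisj π' x := by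
    intro x
    apply Fin.val_injective
    rw [← phat_rank B hd hdisj π x, ← phat_rank B hd hdisj π' x]
    apply congrArg card
    apply filter_congr
    intro y _
    rw [hσ x, hσ y]
  have hpf : phat B hd hdisj π = phat B hd hdisj π' := funext hphat
  -- step 2 : V agrees, embV agrees
  have hV : V B π = V B π' := by
    rw [← image_phat_U B hd hdisj π, ← image_phat_U B hd hdisj π', hpf]
  have hembV : ∀ k, embV B hd hdisj π k = embV B hd hdisj π' k := by
    have haux : ∀ (s t : Finset (Fin n)) (hs : s.card = asz B) (ht : t.card = asz B),
        s = t → ∀ k, s.orderEmbOfFin hs k = t.orderEmbOfFin ht k := by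
      rintro s t hs ht rfl k
      rfl
    intro k
    rw [embV, embV]
    exact haux _ _ _ _ hV k
  -- step 3 : agree off U
  have hnotU : ∀ x ∉ U B, π x = π' x := by
    intro x hx
    rw [← phat_of_not_mem B hd hdisj (π := π) hx, ← phat_of_not_mem B hd hdisj (π := π') hx,
      hpf]
  -- step 4 : blocks have the same image
  have himg : ∀ r : Fin d, (B r).image π = (B r).image π' := by
    intro r
    apply eq_of_subset_of_card_le
    · intro p hp
      obtain ⟨x, hxB, hpx⟩ := mem_image.mp hp
      have hxU : x ∈ U B := (mem_U_iff B).mpr ⟨r, hxB⟩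
      have hpV : p ∈ V B π := by
        rw [V, ← hpx]
        exact mem_image_of_mem _ hxU
      obtain ⟨k, hk⟩ := mem_V_exists B hd hdisj hpV
      have he : eF B hd hdisj π k = x := by
        rw [eF, hk, ← hpx, Equiv.symm_apply_apply]
      have hτk : off B (grp B hd (eF B hd hdisj π k))
            + rhoN B ρ (grp B hd (eF B hd hdisj π k)) (grpRank B hd π (eF B hd hdisj π k))
          = off B (grp B hd (eF B hd hdisj π' k))
            + rhoN B ρ' (grp B hd (eF B hd hdisj π' k))
              (grpRank B hd π' (eF B hd hdisj π' k)) :=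
        congrArg Fin.val (hτ k)
      rw [he] at hτk
      set x'' := eF B hd hdisj π' k with hx''def
      have hx''U : x'' ∈ U B := eF_mem_U B hd hdisj π' k
      have hg : grp B hd x = grp B hd x'' :=
        off_block_inj B (rhoN_lt B (ρ := ρ) (grpRank_lt B hd hdisj (π := π) hxU))
          (rhoN_lt B (ρ := ρ') (grpRank_lt B hd hdisj (π := π') hx''U)) hτk
      have hgr : grp B hd x = r := grp_eq B hd hdisj hxB
      have hx''B : x'' ∈ B r := by
        have := grp_mem B hd hx''U
        rwa [← hg, hgr] at this
      have hπ'x'' : π' x'' = p := by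
        rw [hx''def, pi_eF B hd hdisj π' k, ← hembV k, hk]
      exact mem_image.mpr ⟨x'', hx''B, hπ'x''⟩
    · rw [card_image_of_injective _ π.injective, card_image_of_injective _ π'.injective]
  -- step 5 : π = π'
  have hπ : π = π' := by
    apply Equiv.ext
    intro x
    by_cases hx : x ∈ U B
    · -- kIdx equal
      have h1 : phat B hd hdisj π x = phat B hd hdisj π' x := hphat x
      simp only [phat, dif_pos hx] at h1
      have h2 : embV B hd hdisj π ⟨kIdx B hd π x, kIdx_lt B hd hdisj hx⟩
          = embV B hd hdisj π ⟨kIdx B hd π' x, kIdx_lt B hd hdisj hx⟩ := by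
        rw [h1, hembV]
      have h3 : kIdx B hd π x = kIdx B hd π' x :=
        congrArg Fin.val ((embV B hd hdisj π).injective h2)
      rw [kIdx, kIdx] at h3
      have h4 : grpRank B hd π x = grpRank B hd π' x := by omega
      rw [grpRank, grpRank] at h4
      have hmx : π x ∈ (B (grp B hd x)).image π := mem_image_of_mem _ (grp_mem B hd hx)
      have hmx' : π' x ∈ (B (grp B hd x)).image π := by
        rw [himg]
        exact mem_image_of_mem _ (grp_mem B hd hx)
      apply rk_inj hmx hmx'
      rw [h4, himg]
    · exact hnotU x hx
  -- step 6 : ρ = ρ'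
  subst hπ
  have hρ : ρ = ρ' := by
    funext r
    apply Equiv.ext
    intro j
    obtain ⟨x, hxB, hj⟩ := grpRank_surj B hd hdisj π r j
    have hxU : x ∈ U B := (mem_U_iff B).mpr ⟨r, hxB⟩
    have hpV : π x ∈ V B π := mem_image_of_mem _ hxU
    obtain ⟨k, hk⟩ := mem_V_exists B hd hdisj hpV
    have he : eF B hd hdisj π k = x := by
      rw [eF, hk, Equiv.symm_apply_apply]
    have hτk : off B (grp B hd (eF B hd hdisj π k))
          + rhoN B ρ (grp B hd (eF B hd hdisj π k)) (grpRank B hd π (eF B hd hdisj π k))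
        = off B (grp B hd (eF B hd hdisj π k))
          + rhoN B ρ' (grp B hd (eF B hd hdisj π k)) (grpRank B hd π (eF B hd hdisj π k)) :=
      congrArg Fin.val (hτ k)
    rw [he, grp_eq B hd hdisj hxB, hj] at hτk
    have hr : rhoN B ρ r (j : ℕ) = rhoN B ρ' r (j : ℕ) := by omega
    rw [rhoN, dif_pos j.isLt, rhoN, dif_pos j.isLt] at hr
    exact Fin.val_injective hr
  rw [hρ]

lemma key : n.factorial * ∏ r, ((B r).card).factorial ≤
    (univ.filter (compat B)).card * (asz B).factorial := by
  have hinj := Fintype.card_le_of_injective _ (Theta_inj B hd hdisj)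
  simpa [Fintype.card_prod, Fintype.card_perm, Fintype.card_pi, Fintype.card_fin,
    Fintype.card_subtype, Fintype.card_embedding_eq, Nat.descFactorial_self] using hinj

lemma key' : n.factorial ≤
    (univ.filter (compat B)).card * Nat.multinomial univ (fun r => (B r).card) := by
  have h1 := key B hd hdisj
  have h2 : (∏ r, ((B r).card).factorial) * Nat.multinomial univ (fun r => (B r).card)
      = (asz B).factorial := Nat.multinomial_spec _ _
  have hP : 0 < ∏ r, ((B r).card).factorial :=
    prod_pos fun r _ => Nat.factorial_pos _
  have h3 : (univ.filter (compat B)).card * Nat.multinomial univ (fun r => (B r).card)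
        * (∏ r, ((B r).card).factorial)
      = (univ.filter (compat B)).card * (asz B).factorial := by
    rw [mul_assoc, mul_comm (Nat.multinomial _ _), h2]
  apply Nat.le_of_mul_le_mul_right _ hP
  rw [h3]
  calc n.factorial * ∏ r, ((B r).card).factorial ≤ _ := h1

end SkewBollobas

/-- **Theorem (Hegedüs–Frankl).** If `{(A_i^{(1)}, …, A_i^{(d)})}_{1 ≤ i ≤ m}` is a
skew Bollobás system of `d`-partitions of `[n]` with `d ≥ 2`, then
`∑_i multinomial(|A_i^{(1)}|, …, |A_i^{(d)}|)⁻¹ ≤ C(n + d - 1, d - 1)`. -/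
theorem skew_bollobas_weighted_bound (n d m : ℕ) (hd : 2 ≤ d)
    (A : Fin m → Fin d → Finset ℕ)
    (hAsub : ∀ i r, A i r ⊆ Finset.Icc 1 n)
    (hAdisj : ∀ i, ∀ p q : Fin d, p ≠ q → Disjoint (A i p) (A i q))
    (hskew : ∀ i j : Fin m, i < j →
      ∃ p q : Fin d, p < q ∧ ((A i p) ∩ (A j q)).Nonempty) :
    ∑ i : Fin m,
        ((Nat.multinomial Finset.univ fun r : Fin d => (A i r).card : ℕ) : ℚ)⁻¹
      ≤ (((n + d - 1).choose (d - 1) : ℕ) : ℚ) := by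
  classical
  set B : Fin m → Fin d → Finset (Fin n) :=
    fun i r => univ.filter fun x : Fin n => (x : ℕ) + 1 ∈ A i r with hBdef
  have hBcard : ∀ i r, (B i r).card = (A i r).card := by
    intro i r
    have himg : (B i r).image (fun x : Fin n => (x : ℕ) + 1) = A i r := by
      ext y
      simp only [mem_image, hBdef, mem_filter, mem_univ, true_and]
      constructor
      · rintro ⟨x, hx, rfl⟩
        exact hx
      · intro hy
        have hyI := hAsub i r hy
        rw [Finset.mem_Icc] at hyI
        refine ⟨⟨y - 1, by omega⟩, ?_, by simp; omega⟩
        have : (((⟨y - 1, by omega⟩ : Fin n) : ℕ)) + 1 = y := by simp; omega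
        rw [this]
        exact hy
    rw [← himg]
    rw [card_image_of_injective _ (fun x y h => Fin.val_injective (by omega))]
  have hBdisj : ∀ i, ∀ p q : Fin d, p ≠ q → Disjoint (B i p) (B i q) := by
    intro i p q hpq
    rw [Finset.disjoint_left]
    intro x hxp hxq
    simp only [hBdef, mem_filter] at hxp hxq
    exact (Finset.disjoint_left.mp (hAdisj i p q hpq) hxp.2) hxq.2
  set S : Fin m → Finset (Fin n ↪ Fin (n + d - 1)) :=
    fun i => univ.filter (compat (B i)) with hSdef
  have hkey : ∀ i, n.factorial ≤
      (S i).card * Nat.multinomial univ fun r : Fin d => (A i r).card := by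
    intro i
    have h := SkewBollobas.key' (B i) hd (hBdisj i)
    rwa [show (fun r : Fin d => (B i r).card) = fun r : Fin d => (A i r).card from
      funext fun r => hBcard i r] at h
  have hdisjS : ∀ i j : Fin m, i ≠ j → Disjoint (S i) (S j) := by
    have main : ∀ i j : Fin m, i < j → Disjoint (S i) (S j) := by
      intro i j hij
      rw [Finset.disjoint_left]
      intro f hfi hfj
      simp only [hSdef, mem_filter, mem_univ, true_and] at hfi hfj
      obtain ⟨p, q, hpq, hne⟩ := hskew i j hij
      obtain ⟨y, hy⟩ := hne
      rw [Finset.mem_inter] at hy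
      have hyI := hAsub i p hy.1
      rw [Finset.mem_Icc] at hyI
      have hx1 : ((⟨y - 1, by omega⟩ : Fin n) : ℕ) + 1 = y := by simp; omega
      have hxBi : (⟨y - 1, by omega⟩ : Fin n) ∈ B i p := by
        simp only [hBdef, mem_filter]
        exact ⟨mem_univ _, hx1 ▸ hy.1⟩
      have hxBj : (⟨y - 1, by omega⟩ : Fin n) ∈ B j q := by
        simp only [hBdef, mem_filter]
        exact ⟨mem_univ _, hx1 ▸ hy.2⟩
      have e1 := hfi p _ hxBi
      have e2 := hfj q _ hxBj
      have : (p : ℕ) = (q : ℕ) := by rw [← e1, ← e2]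
      exact absurd (Fin.val_injective this) (ne_of_lt hpq)
    intro i j hij
    rcases lt_or_gt_of_ne hij with h | h
    · exact main i j h
    · exact (main j i h).symm
  have hsum : ∑ i, (S i).card ≤ n.factorial * (n + d - 1).choose (d - 1) := by
    have h1 : (univ.biUnion S).card = ∑ i, (S i).card :=
      card_biUnion fun i _ j _ hij => hdisjS i j hij
    have h2 : (univ.biUnion S).card ≤ Fintype.card (Fin n ↪ Fin (n + d - 1)) :=
      card_le_univ _
    have h3 : Fintype.card (Fin n ↪ Fin (n + d - 1)) = (n + d - 1).descFactorial n := by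
      rw [Fintype.card_embedding_eq, Fintype.card_fin, Fintype.card_fin]
    have h4 : (n + d - 1).descFactorial n = n.factorial * (n + d - 1).choose n :=
      Nat.descFactorial_eq_factorial_mul_choose _ _
    have h5 : (n + d - 1).choose n = (n + d - 1).choose (d - 1) := by
      rw [show d - 1 = n + d - 1 - n by omega]
      exact (Nat.choose_symm (by omega)).symm
    calc ∑ i, (S i).card = (univ.biUnion S).card := h1.symm
      _ ≤ Fintype.card (Fin n ↪ Fin (n + d - 1)) := h2
      _ = (n + d - 1).descFactorial n := h3
      _ = n.factorial * (n + d - 1).choose n := h4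
      _ = n.factorial * (n + d - 1).choose (d - 1) := by rw [h5]
  -- rational arithmetic
  have hfact : (0 : ℚ) < (n.factorial : ℚ) := by exact_mod_cast Nat.factorial_pos n
  have hstep : ∀ i : Fin m,
      ((Nat.multinomial Finset.univ fun r : Fin d => (A i r).card : ℕ) : ℚ)⁻¹
        ≤ ((S i).card : ℚ) / (n.factorial : ℚ) := by
    intro i
    have hm : 0 < Nat.multinomial Finset.univ fun r : Fin d => (A i r).card :=
      Nat.multinomial_pos _ _
    rw [inv_eq_one_div, div_le_div_iff₀ (by exact_mod_cast hm) hfact]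
    have := hkey i
    rw [one_mul]
    exact_mod_cast this
  calc ∑ i : Fin m, ((Nat.multinomial Finset.univ fun r : Fin d => (A i r).card : ℕ) : ℚ)⁻¹
      ≤ ∑ i : Fin m, ((S i).card : ℚ) / (n.factorial : ℚ) :=
        Finset.sum_le_sum fun i _ => hstep i
    _ = (∑ i : Fin m, ((S i).card : ℚ)) / (n.factorial : ℚ) := by rw [Finset.sum_div]
    _ ≤ ((n.factorial * (n + d - 1).choose (d - 1) : ℕ) : ℚ) / (n.factorial : ℚ) := by
        gcongr
        exact_mod_cast hsum
    _ = (((n + d - 1).choose (d - 1) : ℕ) : ℚ) := by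
        push_cast
        field_simp
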